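/- Let F be a quasihomogeneous WDVV solution with charges (q,d) on U ⊆ ℝ^N and suppose d = 1. Then on the open subset of U where the intersection form (g^{αβ}(t)) is invertible, the Christoffel symbols of g satisfy Γ^N_{αβ}(t) = 0 for all α, β; equivalently, t_1 = t^N is a flat coordinate of the intersection form g (it is a flat coordinate of η trivially). -/

import Mathlib

open scoped BigOperators

/-- Partial derivative of `f` in the `α`-th coordinate direction. -/
noncomputable def pd {N : ℕ} (α : Fin N) (f : (Fin N → ℝ) → ℝ) : (Fin N → ℝ) → ℝ :=
  fun t => fderiv ℝ f t (Pi.single α 1)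

/-- Third partial derivatives `c_{αβγ} = ∂³F/∂t^α∂t^β∂t^γ`. -/
noncomputable def c3 {N : ℕ} (F : (Fin N → ℝ) → ℝ) (α β γ : Fin N) : (Fin N → ℝ) → ℝ :=
  pd α (pd β (pd γ F))

/-- `η_{αβ} = δ_{α+β,N+1}` (in 1-based index notation); in 0-based indexing this is
`β = Fin.rev α`.  It coincides with its own inverse `η^{αβ}`. -/
def eta {N : ℕ} (α β : Fin N) : ℝ := if β = α.rev then 1 else 0

/-- The index of the coordinate `t^N` (0-based: `N-1`). -/
def lastIdx (N : ℕ) [NeZero N] : Fin N := (0 : Fin N).rev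

/-- `F` is a WDVV solution on `U`: smoothness, normalization `c_{1αβ} = η_{αβ}`, and the
associativity equations. -/
def IsWDVV {N : ℕ} [NeZero N] (F : (Fin N → ℝ) → ℝ) (U : Set (Fin N → ℝ)) : Prop :=
  (∀ t ∈ U, ContDiffAt ℝ (⊤ : ℕ∞) F t) ∧
  (∀ t ∈ U, ∀ α β : Fin N, c3 F 0 α β t = eta α β) ∧
  (∀ t ∈ U, ∀ α β γ δ : Fin N,
    ∑ lam, ∑ mu, c3 F α β lam t * eta lam mu * c3 F mu δ γ t =
    ∑ lam, ∑ mu, c3 F δ β lam t * eta lam mu * c3 F mu α γ t)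

/-- `F` is quasihomogeneous on `U` with charges `q` and weight `d`:
`q_1 = 0`, `q_N = d`, `q_α + q_{N+1-α} = d`, and `E(F) = (3-d) F` modulo a polynomial of
degree at most `2`, where `E = Σ_α (1-q_α) t^α ∂_α`. -/
def IsQH {N : ℕ} [NeZero N] (F : (Fin N → ℝ) → ℝ) (U : Set (Fin N → ℝ))
    (q : Fin N → ℝ) (d : ℝ) : Prop :=
  q 0 = 0 ∧ q (lastIdx N) = d ∧ (∀ α : Fin N, q α + q α.rev = d) ∧
  ∃ Q : MvPolynomial (Fin N) ℝ, Q.totalDegree ≤ 2 ∧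
    ∀ t ∈ U, (∑ α, (1 - q α) * t α * pd α F t) = (3 - d) * F t + MvPolynomial.eval t Q

/-- The inversion map `t ↦ t̂`:
`t̂^1 = (1/2) t_σ t^σ / t^N`, `t̂^α = t^α/t^N` (`1<α<N`), `t̂^N = -1/t^N`,
with `t_σ t^σ = Σ_σ t^σ t^{N+1-σ}`. -/
noncomputable def invMap {N : ℕ} [NeZero N] (t : Fin N → ℝ) : Fin N → ℝ := fun α =>
  if α = 0 then (∑ σ, t σ * t σ.rev) / (2 * t (lastIdx N))
  else if α = lastIdx N then -1 / t (lastIdx N)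
  else t α / t (lastIdx N)

/-- The inverse of the inversion map, `t̂ ↦ t`:
`t^1 = (1/2) t̂_σ t̂^σ / t̂^N`, `t^α = -t̂^α/t̂^N` (`1<α<N`), `t^N = -1/t̂^N`. -/
noncomputable def invMapInv {N : ℕ} [NeZero N] (s : Fin N → ℝ) : Fin N → ℝ := fun α =>
  if α = 0 then (∑ σ, s σ * s σ.rev) / (2 * s (lastIdx N))
  else if α = lastIdx N then -1 / s (lastIdx N)
  else -(s α) / s (lastIdx N)

/-- The inverted prepotential `F̂(t̂) = (t̂^N)² F(t(t̂)) + (1/2) t̂^1 t̂_σ t̂^σ`. -/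
noncomputable def invF {N : ℕ} [NeZero N] (F : (Fin N → ℝ) → ℝ) : (Fin N → ℝ) → ℝ :=
  fun s => (s (lastIdx N))^2 * F (invMapInv s) + (1/2) * s 0 * (∑ σ, s σ * s σ.rev)

/-- The intersection form `g^{αβ}(t) = Σ_ε (1-q_ε) t^ε η^{αλ} η^{βμ} c_{λμε}(t)`. -/
noncomputable def iform {N : ℕ} (F : (Fin N → ℝ) → ℝ) (q : Fin N → ℝ)
    (t : Fin N → ℝ) : Matrix (Fin N) (Fin N) ℝ :=
  Matrix.of fun α β =>
    ∑ ε, (1 - q ε) * t ε * ∑ lam, ∑ mu, eta α lam * eta β mu * c3 F lam mu ε t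

/-- The Christoffel symbols (with one upper index) of the Levi-Civita connection of the
metric `g_{αβ}` (the matrix inverse of the intersection form), in the coordinates `t`:
`Γ^ε_{αβ} = (1/2) g^{εσ} (∂_α g_{σβ} + ∂_β g_{σα} - ∂_σ g_{αβ})`. -/
noncomputable def christoffel {N : ℕ} (F : (Fin N → ℝ) → ℝ) (q : Fin N → ℝ)
    (t : Fin N → ℝ) (ε α β : Fin N) : ℝ :=
  (1/2) * ∑ σ, iform F q t ε σ *
    (pd α (fun x => (iform F q x)⁻¹ σ β) t + pd β (fun x => (iform F q x)⁻¹ σ α) t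
      - pd σ (fun x => (iform F q x)⁻¹ α β) t)


section Helpers
open Filter MvPolynomial
variable {N : ℕ}

lemma pd_congr {f g : (Fin N → ℝ) → ℝ} {t : Fin N → ℝ} (h : f =ᶠ[nhds t] g) (α : Fin N) :
    pd α f t = pd α g t := by unfold pd; rw [h.fderiv_eq]

lemma contDiffAt_pd {f : (Fin N → ℝ) → ℝ} {t : Fin N → ℝ}
    (hf : ContDiffAt ℝ (⊤ : ℕ∞) f t) (α : Fin N) : ContDiffAt ℝ (⊤ : ℕ∞) (pd α f) t := by
  have h1 : ContDiffAt ℝ (⊤ : ℕ∞) (fderiv ℝ f) t := hf.fderiv_right (by exact_mod_cast le_top)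
  exact (ContinuousLinearMap.apply ℝ ℝ (Pi.single α 1 : Fin N → ℝ)).contDiff.contDiffAt.comp t h1

lemma cd_diff {f : (Fin N → ℝ) → ℝ} {t : Fin N → ℝ} (h : ContDiffAt ℝ (⊤ : ℕ∞) f t) :
    DifferentiableAt ℝ f t := h.differentiableAt (by simp)

lemma pd_coord (α i : Fin N) (t : Fin N → ℝ) :
    pd α (fun x => x i) t = if i = α then 1 else 0 := by
  have : (fun x : Fin N → ℝ => x i)
      = ⇑(ContinuousLinearMap.proj (R := ℝ) (φ := fun _ : Fin N => ℝ) i) := rfl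
  rw [pd, this, ContinuousLinearMap.fderiv]; simp [Pi.single_apply]

lemma diffAt_coord (i : Fin N) (t : Fin N → ℝ) :
    DifferentiableAt ℝ (fun x : Fin N → ℝ => x i) t :=
  ((ContinuousLinearMap.proj (R := ℝ) (φ := fun _ : Fin N => ℝ) i)).differentiableAt

lemma pd_const (α : Fin N) (t : Fin N → ℝ) (c : ℝ) : pd α (fun _ => c) t = 0 := by
  simp [pd]

lemma pd_add {f g : (Fin N → ℝ) → ℝ} {t : Fin N → ℝ} (hf : DifferentiableAt ℝ f t)
    (hg : DifferentiableAt ℝ g t) (α : Fin N) :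
    pd α (fun x => f x + g x) t = pd α f t + pd α g t := by
  simp [pd, fderiv_fun_add hf hg]

lemma pd_mul {f g : (Fin N → ℝ) → ℝ} {t : Fin N → ℝ} (hf : DifferentiableAt ℝ f t)
    (hg : DifferentiableAt ℝ g t) (α : Fin N) :
    pd α (fun x => f x * g x) t = f t * pd α g t + g t * pd α f t := by
  simp [pd, fderiv_fun_mul hf hg]

lemma pd_sum {ι : Type*} (s : Finset ι) {f : ι → (Fin N → ℝ) → ℝ} {t : Fin N → ℝ}
    (h : ∀ i ∈ s, DifferentiableAt ℝ (f i) t) (α : Fin N) :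
    pd α (fun x => ∑ i ∈ s, f i x) t = ∑ i ∈ s, pd α (f i) t := by
  simp [pd, fderiv_fun_sum h]

lemma pd_const_mul {f : (Fin N → ℝ) → ℝ} {t : Fin N → ℝ} (hf : DifferentiableAt ℝ f t)
    (c : ℝ) (α : Fin N) : pd α (fun x => c * f x) t = c * pd α f t := by
  simp [pd, fderiv_const_mul hf]

lemma pd_comm {f : (Fin N → ℝ) → ℝ} {t : Fin N → ℝ}
    (hf : ContDiffAt ℝ (⊤ : ℕ∞) f t) (α β : Fin N) :
    pd α (pd β f) t = pd β (pd α f) t := by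
  have h1 : ContDiffAt ℝ (⊤ : ℕ∞) (fderiv ℝ f) t := hf.fderiv_right (by exact_mod_cast le_top)
  have hd : DifferentiableAt ℝ (fderiv ℝ f) t := h1.differentiableAt (by simp)
  have key : ∀ v w : Fin N → ℝ,
      fderiv ℝ (fun x => fderiv ℝ f x v) t w = fderiv ℝ (fderiv ℝ f) t w v := by
    intro v w
    have : (fun x => fderiv ℝ f x v) = fun x => (fderiv ℝ f x) ((fun _ => v) x) := rfl
    rw [this, fderiv_clm_apply hd (differentiableAt_const v)]
    simp
  have hsym : IsSymmSndFDerivAt ℝ f t := hf.isSymmSndFDerivAt (by simp [minSmoothness_of_isRCLikeNormedField]; exact WithTop.coe_le_coe.mpr (le_top : (2:ℕ∞) ≤ ⊤))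
  show fderiv ℝ (pd β f) t (Pi.single α 1) = fderiv ℝ (pd α f) t (Pi.single β 1)
  unfold pd
  rw [key, key, hsym]

lemma contDiff_mvpoly (Q : MvPolynomial (Fin N) ℝ) :
    ContDiff ℝ (⊤ : ℕ∞) (fun x : Fin N → ℝ => MvPolynomial.eval x Q) := by
  induction Q using MvPolynomial.induction_on with
  | C a => simpa using contDiff_const
  | add p q hp hq => simpa using hp.add hq
  | mul_X p i hp =>
      simpa using hp.mul ((ContinuousLinearMap.proj (R := ℝ) (φ := fun _ : Fin N => ℝ) i).contDiff)

lemma pd_mvpoly (Q : MvPolynomial (Fin N) ℝ) (α : Fin N) (t : Fin N → ℝ) :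
    pd α (fun x => MvPolynomial.eval x Q) t = MvPolynomial.eval t (pderiv α Q) := by
  induction Q using MvPolynomial.induction_on with
  | C a => simp [pd]
  | add p q hp hq =>
      have := pd_add (f := fun x => MvPolynomial.eval x p) (g := fun x => MvPolynomial.eval x q)
        ((contDiff_mvpoly p).differentiable (by simp) t)
        ((contDiff_mvpoly q).differentiable (by simp) t) α
      simp only [map_add]
      rw [this, hp, hq]
  | mul_X p i hp =>
      rw [show (fun x : Fin N → ℝ => MvPolynomial.eval x (p * X i)) =
        (fun x => MvPolynomial.eval x p * x i) by funext x; simp]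
      have hg : DifferentiableAt ℝ (fun x : Fin N → ℝ => x i) t := diffAt_coord i t
      rw [pd_mul ((contDiff_mvpoly p).differentiable (by simp) t) hg α]
      rw [hp, pd_coord, pderiv_mul]
      simp [pderiv_X, Pi.single_apply, eq_comm]
      split_ifs <;> first | (simp; ring) | ring

lemma pderiv_totalDegree_le (Q : MvPolynomial (Fin N) ℝ) (i : Fin N) {n : ℕ}
    (h : Q.totalDegree ≤ n + 1) : (pderiv i Q).totalDegree ≤ n := by
  conv_lhs => rw [Q.as_sum]
  rw [map_sum]
  refine (totalDegree_finset_sum _ _).trans (Finset.sup_le fun m hm => ?_)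
  rw [pderiv_monomial]
  rcases Nat.eq_zero_or_pos (m i) with h0 | h1
  · simp [h0]
  · refine (totalDegree_monomial_le _ _).trans ?_
    have hm2 : (m.sum fun _ e => e) ≤ n + 1 := le_trans (le_totalDegree hm) h
    have key : ((m - (Finsupp.single i 1 : Fin N →₀ ℕ)).sum fun _ e => e) + 1
        = m.sum fun _ e => e := by
      rw [Finsupp.sum_fintype _ _ (fun _ => rfl), Finsupp.sum_fintype _ _ (fun _ => rfl)]
      rw [← Finset.sum_erase_add _ _ (Finset.mem_univ i),
          ← Finset.sum_erase_add _ _ (Finset.mem_univ i)]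
      have : ∀ j ∈ Finset.univ.erase i, (m - (Finsupp.single i 1 : Fin N →₀ ℕ)) j = m j := by
        intro j hj
        rw [Finsupp.tsub_apply, Finsupp.single_apply, if_neg (Finset.ne_of_mem_erase hj).symm]
        simp
      rw [Finset.sum_congr rfl this]
      have : (m - (Finsupp.single i 1 : Fin N →₀ ℕ)) i = m i - 1 := by
        rw [Finsupp.tsub_apply, Finsupp.single_apply, if_pos rfl]
      rw [this]
      have h3 : (Finset.univ.erase i).sum ⇑m = ∑ x ∈ Finset.univ.erase i, m x := rfl
      omega
    have : ((m - (Finsupp.single i 1 : Fin N →₀ ℕ)).sum fun _ (e : ℕ) => e) ≤ n := by omega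
    simpa [Function.id_def] using this

lemma pderiv_of_totalDegree_zero {Q : MvPolynomial (Fin N) ℝ} (h : Q.totalDegree = 0)
    (a : Fin N) : pderiv a Q = 0 := by
  apply MvPolynomial.pderiv_eq_zero_of_notMem_vars
  intro hmem
  obtain ⟨m, hm, ha⟩ := (MvPolynomial.mem_vars a).mp hmem
  have h0 := (MvPolynomial.totalDegree_eq_zero_iff (Fin N) Q).mp h m hm a
  exact (Finsupp.mem_support_iff.mp ha) h0

lemma euler_step {U : Set (Fin N → ℝ)} (hU : IsOpen U) {f g : (Fin N → ℝ) → ℝ}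
    {q : Fin N → ℝ} {k : ℝ}
    (hf : ∀ x ∈ U, ContDiffAt ℝ (⊤ : ℕ∞) f x) (hg : ∀ x ∈ U, ContDiffAt ℝ (⊤ : ℕ∞) g x)
    (h : ∀ x ∈ U, (∑ σ, (1 - q σ) * x σ * pd σ f x) = k * f x + g x) (lam : Fin N) :
    ∀ x ∈ U, (∑ σ, (1 - q σ) * x σ * pd σ (pd lam f) x)
      = (k - (1 - q lam)) * pd lam f x + pd lam g x := by
  intro x hx
  have hUx : U ∈ nhds x := hU.mem_nhds hx
  have heq : (fun y => ∑ σ, (1 - q σ) * y σ * pd σ f y) =ᶠ[nhds x]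
      (fun y => k * f y + g y) := eventually_of_mem hUx h
  have hL := pd_congr heq lam
  have hdiff : ∀ σ : Fin N, σ ∈ Finset.univ →
      DifferentiableAt ℝ (fun y : Fin N → ℝ => (1 - q σ) * y σ * pd σ f y) x := by
    intro σ _
    exact (((diffAt_coord σ x).const_mul _).mul (cd_diff (contDiffAt_pd (hf x hx) σ)))
  rw [pd_sum Finset.univ hdiff lam] at hL
  have hterm : ∀ σ : Fin N,
      pd lam (fun y : Fin N → ℝ => (1 - q σ) * y σ * pd σ f y) x
      = (1 - q σ) * x σ * pd σ (pd lam f) x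
        + pd σ f x * ((1 - q σ) * (if σ = lam then 1 else 0)) := by
    intro σ
    have h1 : DifferentiableAt ℝ (fun y : Fin N → ℝ => (1 - q σ) * y σ) x :=
      (diffAt_coord σ x).const_mul _
    have h2 : DifferentiableAt ℝ (pd σ f) x := cd_diff (contDiffAt_pd (hf x hx) σ)
    rw [pd_mul h1 h2 lam, pd_const_mul (diffAt_coord σ x) _ lam, pd_coord,
      pd_comm (hf x hx) lam σ]
  rw [Finset.sum_congr rfl (fun σ _ => hterm σ)] at hL
  rw [Finset.sum_add_distrib] at hL
  have hite : (∑ σ : Fin N, pd σ f x * ((1 - q σ) * (if σ = lam then 1 else 0)))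
      = (1 - q lam) * pd lam f x := by
    rw [Finset.sum_eq_single lam]
    · simp; ring
    · intro b _ hb; simp [hb]
    · intro hh; exact absurd (Finset.mem_univ lam) hh
  rw [hite] at hL
  have hdf : DifferentiableAt ℝ f x := cd_diff (hf x hx)
  have hdg : DifferentiableAt ℝ g x := cd_diff (hg x hx)
  have hR : pd lam (fun y => k * f y + g y) x = k * pd lam f x + pd lam g x := by
    rw [pd_add (hdf.const_mul k) hdg lam, pd_const_mul hdf k lam]
  rw [hR] at hL
  linarith [hL]

lemma contDiffAt_matdet {M : (Fin N → ℝ) → Matrix (Fin N) (Fin N) ℝ} {t : Fin N → ℝ}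
    (h : ∀ i j, ContDiffAt ℝ (⊤ : ℕ∞) (fun x => M x i j) t) :
    ContDiffAt ℝ (⊤ : ℕ∞) (fun x => (M x).det) t := by
  have e : (fun x => (M x).det)
      = fun x => ∑ σ : Equiv.Perm (Fin N), ((Equiv.Perm.sign σ : ℤ) : ℝ) * ∏ i, M x (σ i) i := by
    funext x; rw [Matrix.det_apply]; congr 1; funext σ; simp [Units.smul_def, zsmul_eq_mul]
  rw [e]
  exact ContDiffAt.sum fun σ _ =>
    contDiffAt_const.mul (contDiffAt_prod (fun i _ => h (σ i) i))

lemma contDiffAt_adjugate {M : (Fin N → ℝ) → Matrix (Fin N) (Fin N) ℝ} {t : Fin N → ℝ}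
    (h : ∀ i j, ContDiffAt ℝ (⊤ : ℕ∞) (fun x => M x i j) t) (i j : Fin N) :
    ContDiffAt ℝ (⊤ : ℕ∞) (fun x => (M x).adjugate i j) t := by
  have e : (fun x => (M x).adjugate i j)
      = fun x => ((M x).updateRow j (Pi.single i 1)).det := by
    funext x; rw [Matrix.adjugate_apply]
  rw [e]
  refine contDiffAt_matdet fun a b => ?_
  rcases eq_or_ne a j with rfl | ha
  · simpa [Matrix.updateRow_apply] using contDiffAt_const
  · simpa [Matrix.updateRow_apply, ha] using h a b

lemma contDiffAt_inv_entry {M : (Fin N → ℝ) → Matrix (Fin N) (Fin N) ℝ} {t : Fin N → ℝ}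
    (h : ∀ i j, ContDiffAt ℝ (⊤ : ℕ∞) (fun x => M x i j) t)
    (hdet : (M t).det ≠ 0) (i j : Fin N) :
    ContDiffAt ℝ (⊤ : ℕ∞) (fun x => (M x)⁻¹ i j) t := by
  have e : (fun x => (M x)⁻¹ i j) = fun x => ((M x).det)⁻¹ * (M x).adjugate i j := by
    funext x; rw [Matrix.inv_def]
    simp [Ring.inverse_eq_inv', Matrix.smul_apply, smul_eq_mul]
  rw [e]
  exact ((contDiffAt_matdet h).inv hdet).mul (contDiffAt_adjugate h i j)

lemma iform_apply {N : ℕ} (F : (Fin N → ℝ) → ℝ) (q : Fin N → ℝ) (x : Fin N → ℝ)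
    (i j : Fin N) :
    iform F q x i j = ∑ ε, (1 - q ε) * x ε * c3 F i.rev j.rev ε x := by
  unfold iform
  rw [Matrix.of_apply]
  refine Finset.sum_congr rfl fun ε _ => ?_
  congr 1
  rw [show (∑ lam, ∑ mu, eta i lam * eta j mu * c3 F lam mu ε x)
      = ∑ lam, (if lam = i.rev then (1:ℝ) else 0) *
          ∑ mu, (if mu = j.rev then (1:ℝ) else 0) * c3 F lam mu ε x by
    refine Finset.sum_congr rfl fun lam _ => ?_
    rw [Finset.mul_sum]
    refine Finset.sum_congr rfl fun mu _ => ?_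
    first | (simp [eta]; ring) | simp [eta]]
  simp [Finset.sum_ite_eq']

end Helpers

/-- when `d = 1`, the Christoffel symbols of the intersection form satisfy
`Γ^N_{αβ} = 0`; equivalently, `t_1 = t^N` is a flat coordinate of the intersection
form. -/
theorem statement15 {N : ℕ} [NeZero N] (hN : 3 ≤ N)
    (U : Set (Fin N → ℝ)) (hU : IsOpen U)
    (F : (Fin N → ℝ) → ℝ) (q : Fin N → ℝ)
    (hW : IsWDVV F U) (hQ : IsQH F U q 1) :
    ∀ t ∈ U, IsUnit (iform F q t).det →
      (∀ α β : Fin N, christoffel F q t (lastIdx N) α β = 0) ∧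
      (∀ α β : Fin N,
        pd α (pd β (fun x => x (lastIdx N))) t =
          ∑ ε, christoffel F q t ε α β * pd ε (fun x => x (lastIdx N)) t) := by
  obtain ⟨hsm, hnorm, _hassoc⟩ := hW
  obtain ⟨hq0, hqN, hqrev, Q, hQdeg, hQeul⟩ := hQ
  intro t ht hdet
  have hLrev : (lastIdx N).rev = (0 : Fin N) := by rw [lastIdx, Fin.rev_rev]
  -- smoothness of c3 and of the entries of the intersection form
  have hc3 : ∀ x ∈ U, ∀ a b c : Fin N, ContDiffAt ℝ (⊤ : ℕ∞) (c3 F a b c) x :=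
    fun x hx a b c => contDiffAt_pd (contDiffAt_pd (contDiffAt_pd (hsm x hx) c) b) a
  have hGentry : ∀ x ∈ U, ∀ i j : Fin N,
      ContDiffAt ℝ (⊤ : ℕ∞) (fun y => iform F q y i j) x := by
    intro x hx i j
    have e : (fun y => iform F q y i j)
        = fun y => ∑ ε, (1 - q ε) * y ε * c3 F i.rev j.rev ε y := by
      funext y; rw [iform_apply]
    rw [e]
    exact ContDiffAt.sum fun ε _ =>
      ((contDiffAt_const.mul
        ((ContinuousLinearMap.proj (R := ℝ) (φ := fun _ : Fin N => ℝ) ε).contDiff.contDiffAt)).mul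
        (hc3 x hx i.rev j.rev ε))
  have hdet0 : (iform F q t).det ≠ 0 := hdet.ne_zero
  have hGsm_t : ∀ i j : Fin N, ContDiffAt ℝ (⊤ : ℕ∞) (fun x => iform F q x i j) t :=
    fun i j => hGentry t ht i j
  have hHsm : ∀ i j : Fin N, ContDiffAt ℝ (⊤ : ℕ∞) (fun x => (iform F q x)⁻¹ i j) t :=
    contDiffAt_inv_entry hGsm_t hdet0
  have hHd : ∀ i j : Fin N, DifferentiableAt ℝ (fun x => (iform F q x)⁻¹ i j) t :=
    fun i j => cd_diff (hHsm i j)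
  have hGd : ∀ i j : Fin N, DifferentiableAt ℝ (fun x => iform F q x i j) t :=
    fun i j => cd_diff (hGsm_t i j)
  have hevU : ∀ᶠ x in nhds t, x ∈ U :=
    Filter.eventually_of_mem (hU.mem_nhds ht) fun x hx => hx
  have hevdet : ∀ᶠ x in nhds t, (iform F q x).det ≠ 0 :=
    ((contDiffAt_matdet hGsm_t).continuousAt).eventually_ne hdet0
  have hev := hevU.and hevdet
  -- the top row of the intersection form
  have hGlast : ∀ x ∈ U, ∀ σ : Fin N, iform F q x (lastIdx N) σ = (1 - q σ) * x σ := by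
    intro x hx σ
    rw [iform_apply, hLrev]
    rw [Finset.sum_congr rfl fun ε _ => by rw [hnorm x hx σ.rev ε]]
    simp [eta, Fin.rev_rev, mul_ite, Finset.sum_ite_eq', Finset.sum_ite_eq]
  -- Euler identity for third derivatives
  have hsmQ : ∀ P : MvPolynomial (Fin N) ℝ, ∀ x ∈ U,
      ContDiffAt ℝ (⊤ : ℕ∞) (fun y => MvPolynomial.eval y P) x :=
    fun P x _ => (contDiff_mvpoly P).contDiffAt
  have hEc3 : ∀ a b c : Fin N, ∀ x ∈ U,
      (∑ σ, (1 - q σ) * x σ * pd σ (c3 F a b c) x)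
        = (q a + q b + q c - 1) * c3 F a b c x := by
    intro a b c
    have s1 := euler_step hU hsm (hsmQ Q) hQeul c
    have s1' : ∀ x ∈ U, (∑ σ, (1 - q σ) * x σ * pd σ (pd c F) x)
        = (3 - 1 - (1 - q c)) * pd c F x
          + MvPolynomial.eval x (MvPolynomial.pderiv c Q) := by
      intro x hx
      rw [← pd_mvpoly]; exact s1 x hx
    have s2 := euler_step hU (fun x hx => contDiffAt_pd (hsm x hx) c) (hsmQ _) s1' b
    have s2' : ∀ x ∈ U, (∑ σ, (1 - q σ) * x σ * pd σ (pd b (pd c F)) x)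
        = (3 - 1 - (1 - q c) - (1 - q b)) * pd b (pd c F) x
          + MvPolynomial.eval x (MvPolynomial.pderiv b (MvPolynomial.pderiv c Q)) := by
      intro x hx
      rw [← pd_mvpoly]; exact s2 x hx
    have s3 := euler_step hU
      (fun x hx => contDiffAt_pd (contDiffAt_pd (hsm x hx) c) b) (hsmQ _) s2' a
    intro x hx
    have hres := s3 x hx
    rw [pd_mvpoly] at hres
    have hz : MvPolynomial.pderiv a (MvPolynomial.pderiv b (MvPolynomial.pderiv c Q)) = 0 := by
      apply pderiv_of_totalDegree_zero
      have d1 : (MvPolynomial.pderiv c Q).totalDegree ≤ 1 :=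
        pderiv_totalDegree_le Q c hQdeg
      have d0 : (MvPolynomial.pderiv b (MvPolynomial.pderiv c Q)).totalDegree ≤ 0 :=
        pderiv_totalDegree_le _ b (by omega)
      omega
    rw [hz, map_zero, add_zero] at hres
    have hcoef : (3 - 1 - (1 - q c) - (1 - q b) - (1 - q a) : ℝ) = q a + q b + q c - 1 := by
      ring
    rw [hcoef] at hres
    exact hres
  -- derivative of the entries of G
  have hpdG : ∀ μ τ σ : Fin N, pd σ (fun x => iform F q x μ τ) t
      = ∑ ε, ((1 - q ε) * t ε * pd σ (c3 F μ.rev τ.rev ε) t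
          + c3 F μ.rev τ.rev ε t * ((1 - q ε) * (if ε = σ then 1 else 0))) := by
    intro μ τ σ
    have e : (fun x => iform F q x μ τ)
        = fun x => ∑ ε, (1 - q ε) * x ε * c3 F μ.rev τ.rev ε x := by
      funext x; rw [iform_apply]
    rw [e, pd_sum Finset.univ
      (fun ε _ => ((diffAt_coord ε t).const_mul _).fun_mul (cd_diff (hc3 t ht μ.rev τ.rev ε))) σ]
    refine Finset.sum_congr rfl fun ε _ => ?_
    rw [pd_mul ((diffAt_coord ε t).const_mul _) (cd_diff (hc3 t ht μ.rev τ.rev ε)) σ,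
        pd_const_mul (diffAt_coord ε t) _ σ, pd_coord]
  -- Euler identity for the entries of G
  have hrev : ∀ α : Fin N, q α.rev = 1 - q α := fun α => by have := hqrev α; linarith
  have hEG : ∀ μ τ : Fin N, (∑ σ, (1 - q σ) * t σ * pd σ (fun x => iform F q x μ τ) t)
      = (2 - q μ - q τ) * iform F q t μ τ := by
    intro μ τ
    calc ∑ σ, (1 - q σ) * t σ * pd σ (fun x => iform F q x μ τ) t
        = ∑ σ, ∑ ε, ((1 - q σ) * t σ * ((1 - q ε) * t ε * pd σ (c3 F μ.rev τ.rev ε) t)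
            + (1 - q σ) * t σ
              * (c3 F μ.rev τ.rev ε t * ((1 - q ε) * (if ε = σ then 1 else 0)))) := by
          refine Finset.sum_congr rfl fun σ _ => ?_
          rw [hpdG μ τ σ, Finset.mul_sum]
          exact Finset.sum_congr rfl fun ε _ => by ring
      _ = (∑ σ, ∑ ε, (1 - q σ) * t σ * ((1 - q ε) * t ε * pd σ (c3 F μ.rev τ.rev ε) t))
          + ∑ σ, ∑ ε, (1 - q σ) * t σ
              * (c3 F μ.rev τ.rev ε t * ((1 - q ε) * (if ε = σ then 1 else 0))) := by
          rw [← Finset.sum_add_distrib]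
          exact Finset.sum_congr rfl fun σ _ => Finset.sum_add_distrib
      _ = (∑ ε, (1 - q ε) * t ε * ∑ σ, (1 - q σ) * t σ * pd σ (c3 F μ.rev τ.rev ε) t)
          + ∑ ε, (1 - q ε) * t ε * (c3 F μ.rev τ.rev ε t * (1 - q ε)) := by
          congr 1
          · rw [Finset.sum_comm]
            refine Finset.sum_congr rfl fun ε _ => ?_
            rw [Finset.mul_sum]
            exact Finset.sum_congr rfl fun σ _ => by ring
          · rw [Finset.sum_comm]
            refine Finset.sum_congr rfl fun ε _ => ?_
            rw [Finset.sum_eq_single ε]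
            · rw [if_pos rfl]; ring
            · intro b _ hb; rw [if_neg (Ne.symm hb)]; ring
            · intro hh; exact absurd (Finset.mem_univ ε) hh
      _ = ∑ ε, (2 - q μ - q τ) * ((1 - q ε) * t ε * c3 F μ.rev τ.rev ε t) := by
          rw [← Finset.sum_add_distrib]
          refine Finset.sum_congr rfl fun ε _ => ?_
          rw [hEc3 μ.rev τ.rev ε t ht, hrev μ, hrev τ]
          ring
      _ = (2 - q μ - q τ) * iform F q t μ τ := by
          rw [iform_apply, Finset.mul_sum]
  -- inverse-matrix identities
  have hmulHG : ∀ x : Fin N → ℝ, (iform F q x).det ≠ 0 → ∀ i j : Fin N,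
      (∑ k, (iform F q x)⁻¹ i k * iform F q x k j) = if i = j then (1:ℝ) else 0 := by
    intro x hx i j
    have h1 := Matrix.nonsing_inv_mul (iform F q x) (isUnit_iff_ne_zero.mpr hx)
    have h2 := congrArg (fun M : Matrix (Fin N) (Fin N) ℝ => M i j) h1
    simpa [Matrix.mul_apply, Matrix.one_apply] using h2
  have hmulGH : ∀ x : Fin N → ℝ, (iform F q x).det ≠ 0 → ∀ i j : Fin N,
      (∑ k, iform F q x i k * (iform F q x)⁻¹ k j) = if i = j then (1:ℝ) else 0 := by
    intro x hx i j
    have h1 := Matrix.mul_nonsing_inv (iform F q x) (isUnit_iff_ne_zero.mpr hx)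
    have h2 := congrArg (fun M : Matrix (Fin N) (Fin N) ℝ => M i j) h1
    simpa [Matrix.mul_apply, Matrix.one_apply] using h2
  -- differentiated inverse identity
  have hstar : ∀ a c σ : Fin N,
      (∑ μ, ((iform F q t)⁻¹ a μ * pd σ (fun x => iform F q x μ c) t
        + iform F q t μ c * pd σ (fun x => (iform F q x)⁻¹ a μ) t)) = 0 := by
    intro a c σ
    have hevEq : (fun x => ∑ μ, (iform F q x)⁻¹ a μ * iform F q x μ c) =ᶠ[nhds t]
        (fun _ => if a = c then (1:ℝ) else 0) := by
      filter_upwards [hev] with x hx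
      exact hmulHG x hx.2 a c
    have h0 := pd_congr hevEq σ
    rw [pd_const] at h0
    rw [pd_sum Finset.univ (fun μ _ => (hHd a μ).fun_mul (hGd μ c)) σ] at h0
    rw [← h0]
    exact Finset.sum_congr rfl fun μ _ => (pd_mul (hHd a μ) (hGd μ c) σ).symm
  -- derivative of the entries of H
  have hpdH : ∀ a b σ : Fin N, pd σ (fun x => (iform F q x)⁻¹ a b) t
      = -∑ μ, ∑ c, (iform F q t)⁻¹ a μ * pd σ (fun x => iform F q x μ c) t
          * (iform F q t)⁻¹ c b := by
    intro a b σ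
    have step1 : pd σ (fun x => (iform F q x)⁻¹ a b) t
        = ∑ c, (∑ μ, pd σ (fun x => (iform F q x)⁻¹ a μ) t * iform F q t μ c)
            * (iform F q t)⁻¹ c b := by
      symm
      calc ∑ c, (∑ μ, pd σ (fun x => (iform F q x)⁻¹ a μ) t * iform F q t μ c)
            * (iform F q t)⁻¹ c b
          = ∑ c, ∑ μ, pd σ (fun x => (iform F q x)⁻¹ a μ) t * iform F q t μ c
              * (iform F q t)⁻¹ c b := by
            exact Finset.sum_congr rfl fun c _ => Finset.sum_mul _ _ _
        _ = ∑ μ, ∑ c, pd σ (fun x => (iform F q x)⁻¹ a μ) t * iform F q t μ c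
              * (iform F q t)⁻¹ c b := Finset.sum_comm
        _ = ∑ μ, pd σ (fun x => (iform F q x)⁻¹ a μ) t
              * ∑ c, iform F q t μ c * (iform F q t)⁻¹ c b := by
            refine Finset.sum_congr rfl fun μ _ => ?_
            rw [Finset.mul_sum]
            exact Finset.sum_congr rfl fun c _ => by ring
        _ = ∑ μ, pd σ (fun x => (iform F q x)⁻¹ a μ) t * (if μ = b then (1:ℝ) else 0) := by
            exact Finset.sum_congr rfl fun μ _ => by rw [hmulGH t hdet0 μ b]
        _ = pd σ (fun x => (iform F q x)⁻¹ a b) t := by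
            rw [Finset.sum_eq_single b]
            · rw [if_pos rfl, mul_one]
            · intro c _ hc; rw [if_neg hc, mul_zero]
            · intro hh; exact absurd (Finset.mem_univ b) hh
    have step2 : ∀ c : Fin N,
        (∑ μ, pd σ (fun x => (iform F q x)⁻¹ a μ) t * iform F q t μ c)
        = -∑ μ, (iform F q t)⁻¹ a μ * pd σ (fun x => iform F q x μ c) t := by
      intro c
      have h1 := hstar a c σ
      rw [Finset.sum_add_distrib] at h1
      have h2 : (∑ μ, iform F q t μ c * pd σ (fun x => (iform F q x)⁻¹ a μ) t)
          = ∑ μ, pd σ (fun x => (iform F q x)⁻¹ a μ) t * iform F q t μ c :=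
        Finset.sum_congr rfl fun μ _ => mul_comm _ _
      rw [h2] at h1
      linarith
    rw [step1, Finset.sum_congr rfl fun c _ => by rw [step2 c]]
    have e1 : ∀ c : Fin N,
        (-∑ μ, (iform F q t)⁻¹ a μ * pd σ (fun x => iform F q x μ c) t) * (iform F q t)⁻¹ c b
        = -∑ μ, (iform F q t)⁻¹ a μ * pd σ (fun x => iform F q x μ c) t
            * (iform F q t)⁻¹ c b := by
      intro c
      rw [neg_mul, Finset.sum_mul]
    rw [Finset.sum_congr rfl fun c _ => e1 c, Finset.sum_neg_distrib]
    congr 1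
    exact Finset.sum_comm
  -- Euler identity for the entries of H
  have hEH : ∀ a b : Fin N, (∑ σ, (1 - q σ) * t σ * pd σ (fun x => (iform F q x)⁻¹ a b) t)
      = -((2 - q a - q b) * (iform F q t)⁻¹ a b) := by
    intro a b
    calc ∑ σ, (1 - q σ) * t σ * pd σ (fun x => (iform F q x)⁻¹ a b) t
        = ∑ σ, -∑ μ, ∑ c, (1 - q σ) * t σ * ((iform F q t)⁻¹ a μ
            * pd σ (fun x => iform F q x μ c) t * (iform F q t)⁻¹ c b) := by
          refine Finset.sum_congr rfl fun σ _ => ?_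
          rw [hpdH a b σ, mul_neg, Finset.mul_sum]
          congr 1
          refine Finset.sum_congr rfl fun μ _ => ?_
          rw [Finset.mul_sum]
      _ = -∑ μ, ∑ σ, ∑ c, (1 - q σ) * t σ * ((iform F q t)⁻¹ a μ
            * pd σ (fun x => iform F q x μ c) t * (iform F q t)⁻¹ c b) := by
          rw [Finset.sum_neg_distrib]
          congr 1
          exact Finset.sum_comm
      _ = -∑ μ, ∑ c, ∑ σ, (1 - q σ) * t σ * ((iform F q t)⁻¹ a μ
            * pd σ (fun x => iform F q x μ c) t * (iform F q t)⁻¹ c b) := by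
          congr 1
          exact Finset.sum_congr rfl fun μ _ => Finset.sum_comm
      _ = -∑ μ, ∑ c, (iform F q t)⁻¹ a μ * ((2 - q μ - q c) * iform F q t μ c)
            * (iform F q t)⁻¹ c b := by
          congr 1
          refine Finset.sum_congr rfl fun μ _ => Finset.sum_congr rfl fun c _ => ?_
          calc ∑ σ, (1 - q σ) * t σ * ((iform F q t)⁻¹ a μ
                * pd σ (fun x => iform F q x μ c) t * (iform F q t)⁻¹ c b)
              = (iform F q t)⁻¹ a μ
                * (∑ σ, (1 - q σ) * t σ * pd σ (fun x => iform F q x μ c) t)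
                * (iform F q t)⁻¹ c b := by
                rw [Finset.mul_sum, Finset.sum_mul]
                exact Finset.sum_congr rfl fun σ _ => by ring
            _ = (iform F q t)⁻¹ a μ * ((2 - q μ - q c) * iform F q t μ c)
                * (iform F q t)⁻¹ c b := by rw [hEG μ c]
      _ = -((2 - q a - q b) * (iform F q t)⁻¹ a b) := by
          congr 1
          calc ∑ μ, ∑ c, (iform F q t)⁻¹ a μ * ((2 - q μ - q c) * iform F q t μ c)
                * (iform F q t)⁻¹ c b
              = (∑ μ, ∑ c, (2 - q μ)
                    * ((iform F q t)⁻¹ a μ * iform F q t μ c * (iform F q t)⁻¹ c b))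
                - ∑ μ, ∑ c, q c
                    * ((iform F q t)⁻¹ a μ * iform F q t μ c * (iform F q t)⁻¹ c b) := by
                rw [← Finset.sum_sub_distrib]
                refine Finset.sum_congr rfl fun μ _ => ?_
                rw [← Finset.sum_sub_distrib]
                exact Finset.sum_congr rfl fun c _ => by ring
            _ = (2 - q b) * (iform F q t)⁻¹ a b - q a * (iform F q t)⁻¹ a b := by
                congr 1
                · calc ∑ μ, ∑ c, (2 - q μ)
                        * ((iform F q t)⁻¹ a μ * iform F q t μ c * (iform F q t)⁻¹ c b)
                      = ∑ μ, (2 - q μ) * ((iform F q t)⁻¹ a μ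
                          * ∑ c, iform F q t μ c * (iform F q t)⁻¹ c b) := by
                        refine Finset.sum_congr rfl fun μ _ => ?_
                        symm
                        rw [Finset.mul_sum, Finset.mul_sum]
                        exact Finset.sum_congr rfl fun c _ => by ring
                    _ = ∑ μ, (2 - q μ) * ((iform F q t)⁻¹ a μ
                          * (if μ = b then (1:ℝ) else 0)) := by
                        exact Finset.sum_congr rfl fun μ _ => by rw [hmulGH t hdet0 μ b]
                    _ = (2 - q b) * (iform F q t)⁻¹ a b := by
                        rw [Finset.sum_eq_single b]
                        · rw [if_pos rfl, mul_one]
                        · intro c _ hc; rw [if_neg hc, mul_zero, mul_zero]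
                        · intro hh; exact absurd (Finset.mem_univ b) hh
                · calc ∑ μ, ∑ c, q c
                        * ((iform F q t)⁻¹ a μ * iform F q t μ c * (iform F q t)⁻¹ c b)
                      = ∑ c, ∑ μ, q c
                        * ((iform F q t)⁻¹ a μ * iform F q t μ c * (iform F q t)⁻¹ c b) :=
                        Finset.sum_comm
                    _ = ∑ c, q c * ((∑ μ, (iform F q t)⁻¹ a μ * iform F q t μ c)
                          * (iform F q t)⁻¹ c b) := by
                        refine Finset.sum_congr rfl fun c _ => ?_
                        symm
                        rw [Finset.sum_mul, Finset.mul_sum]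
                        all_goals exact Finset.sum_congr rfl fun μ _ => by ring
                    _ = ∑ c, q c * ((if a = c then (1:ℝ) else 0) * (iform F q t)⁻¹ c b) := by
                        exact Finset.sum_congr rfl fun c _ => by rw [hmulHG t hdet0 a c]
                    _ = q a * (iform F q t)⁻¹ a b := by
                        rw [Finset.sum_eq_single a]
                        · rw [if_pos rfl, one_mul]
                        · intro c _ hc; rw [if_neg (Ne.symm hc), zero_mul, mul_zero]
                        · intro hh; exact absurd (Finset.mem_univ a) hh
            _ = (2 - q a - q b) * (iform F q t)⁻¹ a b := by ring
  -- symmetry of G and H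
  have hGsymm : Matrix.transpose (iform F q t) = iform F q t := by
    ext i j
    rw [Matrix.transpose_apply, iform_apply, iform_apply]
    refine Finset.sum_congr rfl fun ε _ => ?_
    congr 1
    exact pd_comm (contDiffAt_pd (hsm t ht) ε) j.rev i.rev
  have hHsymm : ∀ a b : Fin N, (iform F q t)⁻¹ b a = (iform F q t)⁻¹ a b := by
    intro a b
    have h1 : Matrix.transpose ((iform F q t)⁻¹) = (Matrix.transpose (iform F q t))⁻¹ :=
      Matrix.transpose_nonsing_inv _
    calc (iform F q t)⁻¹ b a = Matrix.transpose ((iform F q t)⁻¹) a b :=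
        (Matrix.transpose_apply _ _ _).symm
      _ = (Matrix.transpose (iform F q t))⁻¹ a b := by rw [h1]
      _ = (iform F q t)⁻¹ a b := by rw [hGsymm]
  -- the mixed contraction with the last row
  have hCmix : ∀ a b : Fin N,
      (∑ σ, iform F q t (lastIdx N) σ * pd a (fun x => (iform F q x)⁻¹ σ b) t)
        = -((1 - q a) * (iform F q t)⁻¹ a b) := by
    intro a b
    have hevEq : (fun x => ∑ σ, iform F q x (lastIdx N) σ * (iform F q x)⁻¹ σ b)
        =ᶠ[nhds t] (fun _ => if lastIdx N = b then (1:ℝ) else 0) := by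
      filter_upwards [hev] with x hx
      exact hmulGH x hx.2 (lastIdx N) b
    have h0 := pd_congr hevEq a
    rw [pd_const] at h0
    rw [pd_sum Finset.univ (fun σ _ => (hGd (lastIdx N) σ).fun_mul (hHd σ b)) a] at h0
    have hterm : ∀ σ : Fin N,
        pd a (fun x => iform F q x (lastIdx N) σ * (iform F q x)⁻¹ σ b) t
        = iform F q t (lastIdx N) σ * pd a (fun x => (iform F q x)⁻¹ σ b) t
          + (iform F q t)⁻¹ σ b * ((1 - q σ) * (if σ = a then 1 else 0)) := by
      intro σ
      rw [pd_mul (hGd (lastIdx N) σ) (hHd σ b) a]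
      have hevG : (fun x => iform F q x (lastIdx N) σ) =ᶠ[nhds t]
          (fun x => (1 - q σ) * x σ) := by
        filter_upwards [hevU] with x hx
        exact hGlast x hx σ
      rw [pd_congr hevG a, pd_const_mul (diffAt_coord σ t) _ a, pd_coord]
    rw [Finset.sum_congr rfl fun σ _ => hterm σ, Finset.sum_add_distrib] at h0
    have hcol : (∑ σ, (iform F q t)⁻¹ σ b * ((1 - q σ) * (if σ = a then 1 else 0)))
        = (1 - q a) * (iform F q t)⁻¹ a b := by
      rw [Finset.sum_eq_single a]
      · rw [if_pos rfl, mul_one]; ring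
      · intro c _ hc; rw [if_neg hc, mul_zero, mul_zero]
      · intro hh; exact absurd (Finset.mem_univ a) hh
    rw [hcol] at h0
    linarith
  -- vanishing of the Christoffel symbols
  have hgamma : ∀ a b : Fin N, christoffel F q t (lastIdx N) a b = 0 := by
    intro a b
    unfold christoffel
    have hsplit : (∑ σ, iform F q t (lastIdx N) σ *
        (pd a (fun x => (iform F q x)⁻¹ σ b) t + pd b (fun x => (iform F q x)⁻¹ σ a) t
          - pd σ (fun x => (iform F q x)⁻¹ a b) t))
        = (∑ σ, iform F q t (lastIdx N) σ * pd a (fun x => (iform F q x)⁻¹ σ b) t)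
          + (∑ σ, iform F q t (lastIdx N) σ * pd b (fun x => (iform F q x)⁻¹ σ a) t)
          - (∑ σ, (1 - q σ) * t σ * pd σ (fun x => (iform F q x)⁻¹ a b) t) := by
      rw [← Finset.sum_add_distrib, ← Finset.sum_sub_distrib]
      refine Finset.sum_congr rfl fun σ _ => ?_
      rw [hGlast t ht σ]
      ring
    rw [hsplit, hCmix a b, hCmix b a, hEH a b, hHsymm a b]
    ring
  refine ⟨hgamma, ?_⟩
  intro a b
  have h1 : pd b (fun x : Fin N → ℝ => x (lastIdx N))
      = fun _ => if lastIdx N = b then (1:ℝ) else 0 :=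
    funext fun x => pd_coord b (lastIdx N) x
  rw [h1, pd_const]
  symm
  rw [Finset.sum_congr rfl fun ε (_ : ε ∈ Finset.univ) => by rw [pd_coord ε (lastIdx N) t]]
  rw [Finset.sum_eq_single (lastIdx N)]
  · rw [if_pos rfl, mul_one, hgamma a b]
  · intro c _ hc
    rw [if_neg (Ne.symm hc), mul_zero]
  · intro hh
    exact absurd (Finset.mem_univ (lastIdx N)) hh
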